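/- Let Δ be a simplicial complex with a surjective finite abelian group structure 𝒢. Every element (S, h) of the independence poset Ind(E, Δ, 𝒢) lies above exactly one minimal element, namely (∅, π_S(h)); consequently the Hasse diagram of Ind(E, Δ, 𝒢) has exactly |𝒢(∅)| connected components. -/

import Mathlib

open Finset

/-- An assignment of finite abelian groups to the finite subsets of `E`. -/
structure GAssign (E : Type*) [DecidableEq E] where
  G : Finset E → Type
  grp : ∀ S, AddCommGroup (G S)
  fin : ∀ S, Fintype (G S)

instance {E : Type*} [DecidableEq E] (A : GAssign E) (S : Finset E) :
    AddCommGroup (A.G S) := A.grp S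

instance {E : Type*} [DecidableEq E] (A : GAssign E) (S : Finset E) :
    Fintype (A.G S) := A.fin S

/-- A surjective finite abelian group structure on the simplicial complex `Δ`:
finite abelian groups attached to faces, with surjective structure maps along covers
satisfying the commuting-squares condition. -/
structure SFAGS {E : Type*} [DecidableEq E] (Δ : Finset (Finset E)) extends GAssign E where
  π : ∀ (S : Finset E) (a : E), a ∉ S → (toGAssign.G (insert a S) →+ toGAssign.G S)
  surj : ∀ (S : Finset E) (a : E) (ha : a ∉ S), insert a S ∈ Δ →
    Function.Surjective (π S a ha)
  comm : ∀ (S : Finset E) (a b : E) (ha : a ∉ S) (hb : b ∉ S)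
    (hab : a ∉ insert b S) (hba : b ∉ insert a S),
    insert a (insert b S) ∈ Δ →
    ∀ g : toGAssign.G (insert a (insert b S)),
      π S b hb (π (insert b S) a hab g) =
      π S a ha (π (insert a S) b hba
        (cast (congrArg toGAssign.G (Finset.insert_comm a b S)) g))

namespace SFAGS

variable {E : Type*} [DecidableEq E] {Δ : Finset (Finset E)}

/-- Transport along an equality of finsets, as a group homomorphism. -/
def castHom (𝒢 : SFAGS Δ) {S T : Finset E} (h : S = T) : 𝒢.G S →+ 𝒢.G T := by
  subst h; exact AddMonoidHom.id _

/-- The composite of the structure maps along a list enumerating a face. -/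
def chainMap (𝒢 : SFAGS Δ) : (L : List E) → L.Nodup → (𝒢.G L.toFinset →+ 𝒢.G ∅)
  | [], _ => 𝒢.castHom (by simp)
  | a :: L, h =>
      ((𝒢.chainMap L (List.nodup_cons.mp h).2).comp
        (𝒢.π L.toFinset a (by simpa using (List.nodup_cons.mp h).1))).comp
        (𝒢.castHom (by simp))

/-- The composite map `π_S : 𝒢(S) → 𝒢(∅)`. -/
noncomputable def piS (𝒢 : SFAGS Δ) (S : Finset E) : 𝒢.G S →+ 𝒢.G ∅ :=
  (𝒢.chainMap S.toList S.nodup_toList).comp (𝒢.castHom S.toList_toFinset.symm)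

/-- The elements of the independence poset `Ind(E, Δ, 𝒢)`: pairs `(S, g)` with
`S ∈ Δ` and `g ∈ 𝒢(S)`. -/
def Elem (𝒢 : SFAGS Δ) := {p : Σ S : Finset E, 𝒢.G S // p.1 ∈ Δ}

/-- The cover relation of the independence poset: `(insert a S, g)` covers `(S, h)`
iff `π_{S,a}(g) = h`. -/
def CovBy (𝒢 : SFAGS Δ) (p q : 𝒢.Elem) : Prop :=
  ∃ (a : E) (ha : a ∉ p.1.1) (h : q.1.1 = insert a p.1.1),
    𝒢.π p.1.1 a ha (𝒢.castHom h q.1.2) = p.1.2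

/-- The order of the independence poset: reflexive-transitive closure of the covers. -/
def le (𝒢 : SFAGS Δ) : 𝒢.Elem → 𝒢.Elem → Prop := Relation.ReflTransGen 𝒢.CovBy

end SFAGS
namespace SFAGS
variable {E : Type*} [DecidableEq E] {Δ : Finset (Finset E)}

lemma castHom_self (𝒢 : SFAGS Δ) {S : Finset E} (h : S = S) (g : 𝒢.G S) :
    𝒢.castHom h g = g := rfl

lemma castHom_castHom (𝒢 : SFAGS Δ) {S T U : Finset E} (h₁ : S = T) (h₂ : T = U) (g : 𝒢.G S) :
    𝒢.castHom h₂ (𝒢.castHom h₁ g) = 𝒢.castHom (h₁.trans h₂) g := by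
  subst h₁; subst h₂; rfl

lemma cast_eq_castHom (𝒢 : SFAGS Δ) {S T : Finset E} (h : S = T) (g : 𝒢.G S) :
    cast (congrArg 𝒢.G h) g = 𝒢.castHom h g := by subst h; rfl

lemma castHom_π (𝒢 : SFAGS Δ) {S T : Finset E} (e : S = T) (a : E) (ha : a ∉ S) (ha' : a ∉ T)
    (g : 𝒢.G (insert a S)) :
    𝒢.castHom e (𝒢.π S a ha g) = 𝒢.π T a ha' (𝒢.castHom (congrArg (insert a) e) g) := by
  subst e; rfl

lemma chainMap_cons (𝒢 : SFAGS Δ) (a : E) (L : List E) (h : (a :: L).Nodup)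
    (g : 𝒢.G (a :: L).toFinset) :
    𝒢.chainMap (a :: L) h g = 𝒢.chainMap L (List.nodup_cons.mp h).2
      (𝒢.π L.toFinset a (by simpa using (List.nodup_cons.mp h).1)
        (𝒢.castHom (by simp) g)) := rfl

lemma chainMap_congr (𝒢 : SFAGS Δ) {L₁ L₂ : List E} (e : L₁ = L₂) (h₁ : L₁.Nodup) (h₂ : L₂.Nodup)
    (g : 𝒢.G L₁.toFinset) :
    𝒢.chainMap L₁ h₁ g = 𝒢.chainMap L₂ h₂ (𝒢.castHom (by rw [e]) g) := by
  subst e; rfl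


lemma perm_toFinset {l₁ l₂ : List E} (p : l₁.Perm l₂) : l₁.toFinset = l₂.toFinset := by
  ext x; simp [p.mem_iff]

lemma chainMap_perm (𝒢 : SFAGS Δ) (hdc : ∀ ⦃S T : Finset E⦄, S ⊆ T → T ∈ Δ → S ∈ Δ) :
    ∀ {L₁ L₂ : List E}, (p : L₁.Perm L₂) → ∀ (h₁ : L₁.Nodup) (h₂ : L₂.Nodup),
      L₁.toFinset ∈ Δ → ∀ g : 𝒢.G L₁.toFinset,
      𝒢.chainMap L₁ h₁ g = 𝒢.chainMap L₂ h₂ (𝒢.castHom (perm_toFinset p) g) := by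
  intro L₁ L₂ p
  induction p with
  | nil =>
      intro h₁ h₂ hΔ g
      rw [castHom_self]
  | cons a p ih =>
      intro h₁ h₂ hΔ g
      rename_i l₁ l₂
      have hΔ' : l₁.toFinset ∈ Δ := hdc (by intro x hx; simp at hx ⊢; exact Or.inr hx) hΔ
      rw [chainMap_cons, chainMap_cons, ih _ _ hΔ', castHom_π 𝒢 (perm_toFinset p) a
        (by simpa using (List.nodup_cons.mp h₁).1) (by simpa using (List.nodup_cons.mp h₂).1),
        castHom_castHom, castHom_castHom]
  | swap x y l =>
      intro h₁ h₂ hΔ g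
      have hy : y ∉ (x :: l).toFinset := by
        simpa using (List.nodup_cons.mp h₁).1
      have hx : x ∉ l.toFinset := by
        simpa using (List.nodup_cons.mp (List.nodup_cons.mp h₁).2).1
      have hy' : y ∉ l.toFinset := by simp at hy ⊢; tauto
      have hyx : ¬ y = x := by simp at hy; tauto
      have hΔ' : insert y (insert x l.toFinset) ∈ Δ := by
        have : (y :: x :: l).toFinset = insert y (insert x l.toFinset) := by simp
        rwa [this] at hΔ
      rw [chainMap_cons, chainMap_cons, chainMap_cons, chainMap_cons,
        castHom_π 𝒢 (by simp : (x :: l).toFinset = insert x l.toFinset) y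
          (by simpa using (List.nodup_cons.mp h₁).1)
          (by simp; exact ⟨hyx, by simpa using hy'⟩),
        castHom_π 𝒢 (by simp : (y :: l).toFinset = insert y l.toFinset) x
          (by simpa using (List.nodup_cons.mp h₂).1)
          (by simp; exact ⟨fun h => hyx h.symm, by simpa using hx⟩),
        castHom_castHom, castHom_castHom, castHom_castHom,
        𝒢.comm l.toFinset y x hy' hx (by simp; exact ⟨hyx, by simpa using hy'⟩)
          (by simp; exact ⟨fun h => hyx h.symm, by simpa using hx⟩) hΔ',
        cast_eq_castHom, castHom_castHom]
      · exact Finset.insert_comm y x _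
  | trans p₁ p₂ ih₁ ih₂ =>
      intro h₁ h₂ hΔ g
      rename_i l₁ l₂ l₃
      have h₂' : l₂.Nodup := p₁.nodup_iff.mp h₁
      have hΔ₂ : l₂.toFinset ∈ Δ := (perm_toFinset p₁) ▸ hΔ
      rw [ih₁ _ h₂' hΔ, ih₂ _ _ hΔ₂, castHom_castHom]


lemma piS_castHom (𝒢 : SFAGS Δ) {S T : Finset E} (e : S = T) (g : 𝒢.G S) :
    𝒢.piS T (𝒢.castHom e g) = 𝒢.piS S g := by subst e; rfl

lemma piS_empty (𝒢 : SFAGS Δ) (g : 𝒢.G ∅) : 𝒢.piS ∅ g = g := by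
  show 𝒢.chainMap (∅ : Finset E).toList _ (𝒢.castHom _ g) = g
  rw [chainMap_congr 𝒢 (Finset.toList_empty) _ List.nodup_nil, castHom_castHom]
  show 𝒢.castHom (S := ([] : List E).toFinset) _ (𝒢.castHom _ g) = g
  rfl

lemma piS_insert (𝒢 : SFAGS Δ) (hdc : ∀ ⦃S T : Finset E⦄, S ⊆ T → T ∈ Δ → S ∈ Δ)
    {S : Finset E} {a : E} (ha : a ∉ S) (hΔ : insert a S ∈ Δ) (g : 𝒢.G (insert a S)) :
    𝒢.piS (insert a S) g = 𝒢.piS S (𝒢.π S a ha g) := by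
  have hnd : (a :: S.toList).Nodup := (Finset.toList_insert ha).nodup_iff.mp (insert a S).nodup_toList
  have hΔ' : (insert a S).toList.toFinset ∈ Δ := by rwa [Finset.toList_toFinset]
  show 𝒢.chainMap (insert a S).toList _ (𝒢.castHom _ g) = _
  rw [chainMap_perm 𝒢 hdc (Finset.toList_insert ha) _ hnd hΔ', chainMap_cons,
    castHom_castHom, castHom_castHom]
  show 𝒢.chainMap S.toList _ (𝒢.π S.toList.toFinset a _ (𝒢.castHom _ g)) =
    𝒢.chainMap S.toList _ (𝒢.castHom _ (𝒢.π S a ha g))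
  rw [castHom_π 𝒢 (S.toList_toFinset.symm) a ha (by simpa using ha)]

lemma piS_covBy (𝒢 : SFAGS Δ) (hdc : ∀ ⦃S T : Finset E⦄, S ⊆ T → T ∈ Δ → S ∈ Δ)
    {p q : 𝒢.Elem} (h : 𝒢.CovBy p q) :
    𝒢.piS q.1.1 q.1.2 = 𝒢.piS p.1.1 p.1.2 := by
  obtain ⟨a, ha, e, hg⟩ := h
  have hins : insert a p.1.1 ∈ Δ := e ▸ q.2
  rw [← piS_castHom 𝒢 e q.1.2, piS_insert 𝒢 hdc ha hins, hg]

lemma piS_le (𝒢 : SFAGS Δ) (hdc : ∀ ⦃S T : Finset E⦄, S ⊆ T → T ∈ Δ → S ∈ Δ)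
    {p q : 𝒢.Elem} (h : 𝒢.le p q) :
    𝒢.piS q.1.1 q.1.2 = 𝒢.piS p.1.1 p.1.2 := by
  induction h with
  | refl => rfl
  | tail _ hcov ih => rw [piS_covBy 𝒢 hdc hcov, ih]

lemma le_bot (𝒢 : SFAGS Δ) (hdc : ∀ ⦃S T : Finset E⦄, S ⊆ T → T ∈ Δ → S ∈ Δ)
    (hempty : ∅ ∈ Δ) :
    ∀ (S : Finset E) (hS : S ∈ Δ) (h : 𝒢.G S),
      𝒢.le ⟨⟨∅, 𝒢.piS S h⟩, hempty⟩ ⟨⟨S, h⟩, hS⟩ := by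
  intro S
  induction S using Finset.strongInduction with
  | _ S ih =>
    intro hS h
    rcases S.eq_empty_or_nonempty with rfl | ⟨a, haS⟩
    · have : 𝒢.piS ∅ h = h := piS_empty 𝒢 h
      rw [this]
      exact Relation.ReflTransGen.refl
    · set S' := S.erase a with hS'def
      have hins : S = insert a S' := (Finset.insert_erase haS).symm
      have ha : a ∉ S' := Finset.notMem_erase a S
      have hS'Δ : S' ∈ Δ := hdc (Finset.erase_subset a S) hS
      have hssub : S' ⊂ S := Finset.erase_ssubset haS
      set h' : 𝒢.G S' := 𝒢.π S' a ha (𝒢.castHom hins h) with h'def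
      have hcov : 𝒢.CovBy ⟨⟨S', h'⟩, hS'Δ⟩ ⟨⟨S, h⟩, hS⟩ := ⟨a, ha, hins, rfl⟩
      have hpi : 𝒢.piS S' h' = 𝒢.piS S h := by
        rw [h'def, ← piS_insert 𝒢 hdc ha (hins ▸ hS), piS_castHom]
      have := ih S' hssub hS'Δ h'
      rw [hpi] at this
      exact Relation.ReflTransGen.tail this hcov

end SFAGS


/-- Every element `(S, h)` of `Ind(E, Δ, 𝒢)` lies above exactly one minimal
element, namely `(∅, π_S(h))`; consequently the Hasse diagram of `Ind(E, Δ, 𝒢)` has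
exactly `|𝒢(∅)|` connected components. -/
theorem ind_poset_components {E : Type*} [DecidableEq E] [Fintype E]
    {Δ : Finset (Finset E)} (𝒢 : SFAGS Δ)
    (hdc : ∀ ⦃S T : Finset E⦄, S ⊆ T → T ∈ Δ → S ∈ Δ) (hempty : ∅ ∈ Δ) :
    (∀ p : 𝒢.Elem,
      𝒢.le ⟨⟨∅, 𝒢.piS p.1.1 p.1.2⟩, hempty⟩ p ∧
      ∀ g : 𝒢.G ∅, 𝒢.le ⟨⟨∅, g⟩, hempty⟩ p → g = 𝒢.piS p.1.1 p.1.2) ∧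
    Nat.card (Quot (fun p q : 𝒢.Elem => 𝒢.CovBy p q ∨ 𝒢.CovBy q p)) =
      Nat.card (𝒢.G ∅) := by
  have hbot : ∀ p : 𝒢.Elem, 𝒢.le ⟨⟨∅, 𝒢.piS p.1.1 p.1.2⟩, hempty⟩ p := by
    intro ⟨⟨S, h⟩, hS⟩
    exact SFAGS.le_bot 𝒢 hdc hempty S hS h
  have huniq : ∀ (p : 𝒢.Elem) (g : 𝒢.G ∅), 𝒢.le ⟨⟨∅, g⟩, hempty⟩ p →
      g = 𝒢.piS p.1.1 p.1.2 := by
    intro p g hle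
    have := SFAGS.piS_le 𝒢 hdc hle
    rw [this]
    exact (SFAGS.piS_empty 𝒢 g).symm
  refine ⟨fun p => ⟨hbot p, huniq p⟩, ?_⟩
  set r : 𝒢.Elem → 𝒢.Elem → Prop := fun p q => 𝒢.CovBy p q ∨ 𝒢.CovBy q p with hr
  have hmk : ∀ p q : 𝒢.Elem, 𝒢.le p q → Quot.mk r p = Quot.mk r q := by
    intro p q hle
    induction hle with
    | refl => rfl
    | tail _ hcov ih => exact ih.trans (Quot.sound (Or.inl hcov))
  refine Nat.card_congr ⟨Quot.lift (fun p => 𝒢.piS p.1.1 p.1.2) ?_,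
    fun g => Quot.mk r ⟨⟨∅, g⟩, hempty⟩, ?_, ?_⟩
  · intro p q h
    rcases h with h | h
    · exact (SFAGS.piS_covBy 𝒢 hdc h).symm
    · exact SFAGS.piS_covBy 𝒢 hdc h
  · refine Quot.ind ?_
    intro p
    exact hmk _ _ (hbot p)
  · intro g
    exact SFAGS.piS_empty 𝒢 g
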